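/- Structure theorem: Let G be an abelian group and ≾ a total quasi-order on G. Then ≾ satisfies (Q1) and (Q2) if and only if G admits a subgroup H such that: (1) H is an initial segment of G; (2) ≾ restricted to H is a total order making (H,≾) an ordered abelian group; (3) there exists a valuation v on G such that v(h) > v(g) for every h ∈ H and g ∈ G \ H, and for all g, h ∈ G \ H, g ≾ h ⇔ v(g) ≥ v(h). -/

import Mathlib

universe u

variable {G : Type u} [AddCommGroup G]

/-- `r` is a total quasi-order: reflexive, transitive, any two elements comparable. -/
def TotalQO (r : G → G → Prop) : Prop :=
  (∀ x, r x x) ∧ (∀ x y z, r x y → r y z → r x z) ∧ (∀ x y, r x y ∨ r y x)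

/-- Axiom (Q1): `x ∼ 0 → x = 0`. -/
def AxQ1 (r : G → G → Prop) : Prop := ∀ x, r x 0 → r 0 x → x = 0

/-- Axiom (Q2): `x ≾ y ∧ ¬(y ∼ z) → x + z ≾ y + z`. -/
def AxQ2 (r : G → G → Prop) : Prop :=
  ∀ x y z, r x y → ¬(r y z ∧ r z y) → r (x + z) (y + z)

/-- A compatible quasi-ordered abelian group: a total quasi-order satisfying (Q1) and (Q2). -/
def Compatible (r : G → G → Prop) : Prop := TotalQO r ∧ AxQ1 r ∧ AxQ2 r

/-- `g` is o-type: its `∼`-class is a singleton and `g` does not have order 2. -/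
def OType (r : G → G → Prop) (g : G) : Prop :=
  (∀ h, r h g → r g h → h = g) ∧ (g + g = 0 → g = 0)

/-- `g` is v-type: its `∼`-class is not a singleton, or `g + g = 0`. -/
def VType (r : G → G → Prop) (g : G) : Prop :=
  (∃ h, h ≠ g ∧ r h g ∧ r g h) ∨ g + g = 0

/-- A group valuation with values in `WithTop Γ` (`⊤` playing the role of `∞`). -/
def IsValuation {A : Type u} [AddCommGroup A] {Γ : Type u} [LinearOrder Γ]
    (v : A → WithTop Γ) : Prop :=
  (∀ g, v g = ⊤ ↔ g = 0) ∧ (∀ g, v (-g) = v g) ∧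
  (∀ g h, min (v g) (v h) ≤ v (g + h))

/-- A quasi-order is valuational if it is induced by some valuation:
`g ≾ h ↔ v g ≥ v h`. -/
def Valuational {A : Type u} [AddCommGroup A] (r : A → A → Prop) : Prop :=
  ∃ (Γ : Type u) (_ : LinearOrder Γ) (v : A → WithTop Γ),
    IsValuation v ∧ ∀ g h, r g h ↔ v h ≤ v g

namespace QOStruct

/-- o-type predicate: the candidate subgroup. -/
def Hp (r : G → G → Prop) (x : G) : Prop := r x (-x) → r (-x) x → x = 0

variable {r : G → G → Prop}

theorem vprop {g : G} (hg : ¬ Hp r g) : r g (-g) ∧ r (-g) g ∧ g ≠ 0 := by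
  unfold Hp at hg; push_neg at hg; exact ⟨hg.1, hg.2.1, hg.2.2⟩

theorem Hp_zero : Hp r (0 : G) := fun _ _ => rfl

theorem Hp_neg {h : G} (hh : Hp r h) : Hp r (-h) := by
  intro p q
  rw [neg_neg] at p q
  rw [hh q p, neg_zero]

theorem nHp_neg {h : G} (hh : ¬ Hp r h) : ¬ Hp r (-h) := fun c => hh (by simpa using Hp_neg c)

theorem L1 (ht : TotalQO r) (h1 : AxQ1 r) (h2 : AxQ2 r) {a b : G}
    (hab : r a b) (hba : r b a) (hne : a ≠ b) : r b (-b) ∧ r (-b) b := by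
  by_contra hnb
  have e1 := h2 a b (-b) hab hnb
  have hnab : ¬ (r a (-b) ∧ r (-b) a) := fun hc =>
    hnb ⟨ht.2.1 b a (-b) hba hc.1, ht.2.1 (-b) a b hc.2 hab⟩
  have e2 := h2 b a (-b) hba hnab
  rw [add_neg_cancel] at e1 e2
  exact hne (add_neg_eq_zero.mp (h1 _ e1 e2))

theorem not_sim_VH (ht : TotalQO r) (h1 : AxQ1 r) (h2 : AxQ2 r) {a b : G}
    (ha : ¬ Hp r a) (hb : Hp r b) : ¬ (r a b ∧ r b a) := by
  rintro ⟨p, q⟩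
  obtain ⟨s1, s2, a0⟩ := vprop ha
  by_cases he : a = b
  · subst he; exact a0 (hb s1 s2)
  · have hcol := L1 ht h1 h2 p q he
    have b0 : b = 0 := hb hcol.1 hcol.2
    subst b0
    exact a0 (h1 a p q)

theorem not_le_zero (ht : TotalQO r) (h1 : AxQ1 r) (h2 : AxQ2 r) {g : G}
    (hg : ¬ Hp r g) : ¬ r g 0 := by
  intro rg0
  obtain ⟨s1, s2, g0⟩ := vprop hg
  have rng0 : r (-g) 0 := ht.2.1 _ _ _ s2 rg0
  have side : ¬ (r 0 (-g) ∧ r (-g) 0) := fun hc => g0 (neg_eq_zero.mp (h1 (-g) hc.2 hc.1))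
  have e := h2 g 0 (-g) rg0 side
  rw [add_neg_cancel, zero_add] at e
  exact g0 (neg_eq_zero.mp (h1 (-g) rng0 e))

/-- Key lemma: v-type elements are strictly above o-type elements. -/
theorem below (ht : TotalQO r) (h1 : AxQ1 r) (h2 : AxQ2 r) {g h : G}
    (hg : ¬ Hp r g) (hh : Hp r h) : ¬ r g h := by
  intro rgh
  obtain ⟨s1, s2, g0⟩ := vprop hg
  have hng : ¬ Hp r (-g) := nHp_neg hg
  have h0 : h ≠ 0 := by rintro rfl; exact not_le_zero ht h1 h2 hg rgh
  have nsgh := not_sim_VH ht h1 h2 hg hh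
  have nsg'h := not_sim_VH ht h1 h2 hng hh
  have e1 : r (g + h) (-g + h) := h2 g (-g) h s1 nsg'h
  have e2 : r (-g + h) (g + h) := h2 (-g) g h s2 nsgh
  have tneh : -g + h ≠ h := fun e => g0 (neg_eq_zero.mp (add_eq_right.mp e))
  have uneh : g + h ≠ h := fun e => g0 (add_eq_right.mp e)
  have nsth : ¬ (r (-g + h) h ∧ r h (-g + h)) := by
    rintro ⟨p, q⟩
    have c := L1 ht h1 h2 p q tneh
    exact h0 (hh c.1 c.2)
  have nsuh : ¬ (r (g + h) h ∧ r h (g + h)) := by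
    rintro ⟨p, q⟩
    have c := L1 ht h1 h2 p q uneh
    exact h0 (hh c.1 c.2)
  rcases ht.2.2 (g + h) h with ruh | rhu
  · have side : ¬ (r h (-g) ∧ r (-g) h) := fun hc => nsg'h ⟨hc.2, hc.1⟩
    have e3 := h2 (g + h) h (-g) ruh side
    have k1 : g + h + -g = h := by abel
    have k2 : h + -g = -g + h := by abel
    rw [k1, k2] at e3
    exact nsth ⟨ht.2.1 _ _ _ e2 ruh, e3⟩
  · have rht : r h (-g + h) := ht.2.1 _ _ _ rhu e1
    by_cases hsim : r (-g + h) g ∧ r g (-g + h)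
    · exact nsgh ⟨rgh, ht.2.1 _ _ _ rht hsim.1⟩
    · have e4 := h2 h (-g + h) g rht hsim
      have k3 : -g + h + g = h := by abel
      have k4 : h + g = g + h := by abel
      rw [k3, k4] at e4
      exact nsuh ⟨e4, rhu⟩

theorem Hp_add (ht : TotalQO r) (h1 : AxQ1 r) (h2 : AxQ2 r) {x y : G}
    (hx : Hp r x) (hy : Hp r y) : Hp r (x + y) := by
  by_contra hs
  have r1 : r (-x) (x + y) :=
    (ht.2.2 (x + y) (-x)).resolve_left (below ht h1 h2 hs (Hp_neg hx))
  have side := not_sim_VH ht h1 h2 hs (Hp_neg hy)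
  have e : r (-x + -y) ((x + y) + -y) := h2 (-x) (x + y) (-y) r1 side
  have k1 : -x + -y = -(x + y) := by abel
  have k2 : (x + y) + -y = x := by abel
  rw [k1, k2] at e
  exact below ht h1 h2 (nHp_neg hs) hx e

theorem anti (ht : TotalQO r) (h1 : AxQ1 r) (h2 : AxQ2 r) {x y : G}
    (hx : Hp r x) (hy : Hp r y) (p : r x y) (q : r y x) : x = y := by
  by_contra hne
  have c1 := L1 ht h1 h2 p q hne
  have c2 := L1 ht h1 h2 q p (Ne.symm hne)
  exact hne ((hx c2.1 c2.2).trans (hy c1.1 c1.2).symm)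


theorem transH (ht : TotalQO r) (h1 : AxQ1 r) (h2 : AxQ2 r) {x y z : G}
    (hx : Hp r x) (hy : Hp r y) (hz : Hp r z) (p : r x y) : r (x + z) (y + z) := by
  by_cases hs : r y z ∧ r z y
  · have hyz : y = z := anti ht h1 h2 hy hz hs.1 hs.2
    subst hyz
    by_cases hxy : x = y
    · subst hxy; exact ht.1 _
    have hnyx : ¬ r y x := fun q => hxy (anti ht h1 h2 hx hy p q)
    by_cases hc : r (x + y) (-y) ∧ r (-y) (x + y)
    · have hxy2 : x + y = -y :=
        anti ht h1 h2 (Hp_add ht h1 h2 hx hy) (Hp_neg hy) hc.1 hc.2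
      have hy0 : y ≠ 0 := by
        rintro rfl
        exact hxy (by simpa using hxy2)
      have s1 : ¬ (r y (y + y) ∧ r (y + y) y) := by
        rintro ⟨a, b⟩
        have e := anti ht h1 h2 hy (Hp_add ht h1 h2 hy hy) a b
        exact hy0 (left_eq_add.mp e)
      have e5 := h2 x y (y + y) p s1
      have k5 : x + (y + y) = (0 : G) := by
        have h' : x + (y + y) = (x + y) + y := by abel
        rw [h', hxy2, neg_add_cancel]
      rw [k5] at e5
      have s2 : ¬ (r (y + (y + y)) (-y) ∧ r (-y) (y + (y + y))) := by
        rintro ⟨a, b⟩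
        have e6 : y + (y + y) = -y :=
          anti ht h1 h2 (Hp_add ht h1 h2 hy (Hp_add ht h1 h2 hy hy)) (Hp_neg hy) a b
        have e7 : (y + y) + (y + y) = 0 := by
          have h' : (y + y) + (y + y) = (y + (y + y)) + y := by abel
          rw [h', e6, neg_add_cancel]
        have e8 : (y + y) = -(y + y) := eq_neg_of_add_eq_zero_left e7
        have e9 : y + y = 0 :=
          (Hp_add ht h1 h2 hy hy) (by rw [← e8]; exact ht.1 _) (by rw [← e8]; exact ht.1 _)
        have e10 : y = -y := eq_neg_of_add_eq_zero_left e9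
        exact hy0 (hy (by rw [← e10]; exact ht.1 _) (by rw [← e10]; exact ht.1 _))
      have e11 := h2 0 (y + (y + y)) (-y) e5 s2
      have k6 : (0 : G) + -y = -y := zero_add _
      have k7 : (y + (y + y)) + -y = y + y := by abel
      rw [k6, k7] at e11
      rw [hxy2]
      exact e11
    · by_contra hgoal
      have hyx2 : r (y + y) (x + y) := (ht.2.2 _ _).resolve_left hgoal
      have e := h2 (y + y) (x + y) (-y) hyx2 hc
      have k8 : (y + y) + -y = y := by abel
      have k9 : (x + y) + -y = x := by abel
      rw [k8, k9] at e
      exact hnyx e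
  · exact h2 x y z p hs

/-- o-type elements are infinitesimal w.r.t. v-type elements: `g + h ∼ h`. -/
theorem inf (ht : TotalQO r) (h1 : AxQ1 r) (h2 : AxQ2 r) {g h : G}
    (hgH : Hp r g) (hhV : ¬ Hp r h) : r (g + h) h ∧ r h (g + h) := by
  obtain ⟨s1, s2, h0⟩ := vprop hhV
  have hnh : ¬ Hp r (-h) := nHp_neg hhV
  have nsg : ¬ (r h g ∧ r g h) := not_sim_VH ht h1 h2 hhV hgH
  have nsg' : ¬ (r (-h) g ∧ r g (-h)) := not_sim_VH ht h1 h2 hnh hgH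
  have eAB : r (h + g) (-h + g) := h2 h (-h) g s1 nsg'
  have eBA : r (-h + g) (h + g) := h2 (-h) h g s2 nsg
  have hB : ¬ Hp r (-h + g) := by
    intro c
    apply hhV
    have c2 : Hp r ((-h + g) + -g) := Hp_add ht h1 h2 c (Hp_neg hgH)
    have k : (-h + g) + -g = -h := by abel
    rw [k] at c2
    simpa using Hp_neg c2
  obtain ⟨sB1, sB2, _⟩ := vprop hB
  have kneg : -(-h + g) = h + -g := by abel
  rw [kneg] at sB1 sB2
  have c1 : r (h + g) (h + -g) := ht.2.1 _ _ _ eAB sB1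
  have c2 : r (h + -g) (h + g) := ht.2.1 _ _ _ sB2 eBA
  have sideg : ¬ (r h (-g) ∧ r (-g) h) := not_sim_VH ht h1 h2 hhV (Hp_neg hgH)
  have hA : ¬ Hp r (h + g) := by
    intro c
    apply hhV
    have c3 : Hp r ((h + g) + -g) := Hp_add ht h1 h2 c (Hp_neg hgH)
    have k : (h + g) + -g = h := by abel
    rwa [k] at c3
  have sideA : ¬ (r (h + g) (-g) ∧ r (-g) (h + g)) :=
    not_sim_VH ht h1 h2 hA (Hp_neg hgH)
  rw [add_comm g h]
  rcases ht.2.2 (h + g) h with pp | qq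
  · have e := h2 (h + g) h (-g) pp sideg
    have k1 : (h + g) + -g = h := by abel
    rw [k1] at e
    exact ⟨pp, ht.2.1 _ _ _ e c2⟩
  · have e := h2 h (h + g) (-g) qq sideA
    have k1 : (h + g) + -g = h := by abel
    rw [k1] at e
    exact ⟨ht.2.1 _ _ _ c1 e, qq⟩

/-! ### Quotient value group -/

def qrel (r : G → G → Prop) (x y : G) : Prop :=
  (Hp r x ∧ Hp r y) ∨ (¬ Hp r x ∧ ¬ Hp r y ∧ r x y ∧ r y x)

theorem qrel_refl (ht : TotalQO r) (x : G) : qrel r x x := by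
  by_cases h : Hp r x
  · exact Or.inl ⟨h, h⟩
  · exact Or.inr ⟨h, h, ht.1 x, ht.1 x⟩

theorem qrel_symm {x y : G} (h : qrel r x y) : qrel r y x := by
  rcases h with ⟨a, b⟩ | ⟨a, b, c, d⟩
  · exact Or.inl ⟨b, a⟩
  · exact Or.inr ⟨b, a, d, c⟩

theorem qrel_trans (ht : TotalQO r) {x y z : G} (h : qrel r x y) (h' : qrel r y z) :
    qrel r x z := by
  rcases h with ⟨a, b⟩ | ⟨a, b, c, d⟩
  · rcases h' with ⟨a', b'⟩ | ⟨a', b', c', d'⟩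
    · exact Or.inl ⟨a, b'⟩
    · exact absurd b a'
  · rcases h' with ⟨a', b'⟩ | ⟨a', b', c', d'⟩
    · exact absurd a' b
    · exact Or.inr ⟨a, b', ht.2.1 _ _ _ c c', ht.2.1 _ _ _ d' d⟩

def qst (r : G → G → Prop) (ht : TotalQO r) : Setoid G :=
  ⟨qrel r, ⟨qrel_refl ht, fun h => qrel_symm h, fun h h' => qrel_trans ht h h'⟩⟩

def QT (r : G → G → Prop) (ht : TotalQO r) : Type u := Quotient (qst r ht)

def qle0 (r : G → G → Prop) (x y : G) : Prop := Hp r y ∨ (¬ Hp r x ∧ r y x)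

theorem qle0_resp (ht : TotalQO r) {x x' y y' : G} (hx : qrel r x x') (hy : qrel r y y')
    (h : qle0 r x y) : qle0 r x' y' := by
  rcases h with hy0 | ⟨hnx, ryx⟩
  · rcases hy with ⟨_, h2'⟩ | ⟨hny, _⟩
    · exact Or.inl h2'
    · exact absurd hy0 hny
  · rcases hx with ⟨hx0, _⟩ | ⟨_, hnx', sxx'⟩
    · exact absurd hx0 hnx
    · rcases hy with ⟨hy0, hy0'⟩ | ⟨_, hny', syy'⟩
      · exact Or.inl hy0'
      · exact Or.inr ⟨hnx', ht.2.1 _ _ _ (ht.2.1 _ _ _ syy'.2 ryx) sxx'.1⟩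

def qle (r : G → G → Prop) (ht : TotalQO r) : QT r ht → QT r ht → Prop :=
  Quotient.lift₂ (qle0 r) (fun _ _ _ _ ha hb =>
    propext ⟨qle0_resp ht ha hb, qle0_resp ht (qrel_symm ha) (qrel_symm hb)⟩)

noncomputable def qlo (r : G → G → Prop) (ht : TotalQO r) : LinearOrder (QT r ht) where
  le := qle r ht
  le_refl a := by
    induction a using Quotient.inductionOn with
    | _ x =>
      show qle0 r x x
      by_cases h : Hp r x
      · exact Or.inl h
      · exact Or.inr ⟨h, ht.1 x⟩
  le_trans a b c := by
    induction a using Quotient.inductionOn with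
    | _ x =>
    induction b using Quotient.inductionOn with
    | _ y =>
    induction c using Quotient.inductionOn with
    | _ z =>
      intro hab hbc
      have hab' : qle0 r x y := hab
      have hbc' : qle0 r y z := hbc
      show qle0 r x z
      rcases hbc' with hz | ⟨hny, rzy⟩
      · exact Or.inl hz
      · rcases hab' with hy | ⟨hnx, ryx⟩
        · exact absurd hy hny
        · exact Or.inr ⟨hnx, ht.2.1 _ _ _ rzy ryx⟩
  le_antisymm a b := by
    induction a using Quotient.inductionOn with
    | _ x =>
    induction b using Quotient.inductionOn with
    | _ y =>
      intro hab hba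
      have hab' : qle0 r x y := hab
      have hba' : qle0 r y x := hba
      apply Quotient.sound
      rcases hab' with hy | ⟨hnx, ryx⟩
      · rcases hba' with hx | ⟨hny, rxy⟩
        · exact Or.inl ⟨hx, hy⟩
        · exact absurd hy hny
      · rcases hba' with hx | ⟨hny, rxy⟩
        · exact absurd hx hnx
        · exact Or.inr ⟨hnx, hny, rxy, ryx⟩
  le_total a b := by
    induction a using Quotient.inductionOn with
    | _ x =>
    induction b using Quotient.inductionOn with
    | _ y =>
      by_cases hy : Hp r y
      · exact Or.inl (Or.inl hy)
      · by_cases hx : Hp r x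
        · exact Or.inr (Or.inl hx)
        · rcases ht.2.2 x y with h | h
          · exact Or.inr (Or.inr ⟨hy, h⟩)
          · exact Or.inl (Or.inr ⟨hx, h⟩)
  toDecidableLE _ _ := Classical.propDecidable _

open scoped Classical in
noncomputable def qv (r : G → G → Prop) (ht : TotalQO r) : G → WithTop (QT r ht) :=
  fun g => if g = 0 then ⊤ else WithTop.some (Quotient.mk (qst r ht) g)

end QOStruct

/-- Structure theorem: a total quasi-order `≾` on an abelian
group `G` satisfies (Q1) and (Q2) iff `G` has a subgroup `H` such that
(1) `H` is an initial segment, (2) `(H, ≾)` is an ordered abelian group, and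
(3) there is a valuation `v` on `G` with `v(H) > v(G \ H)` and
`g ≾ h ↔ v g ≥ v h` on `G \ H`. -/
theorem structure_theorem (r : G → G → Prop) (htqo : TotalQO r) :
    (AxQ1 r ∧ AxQ2 r) ↔
    ∃ H : AddSubgroup G,
      (∀ s ∈ H, ∀ a : G, r a s → a ∈ H) ∧
      ((∀ x y : G, x ∈ H → y ∈ H → r x y → r y x → x = y) ∧
        (∀ x y z : G, x ∈ H → y ∈ H → z ∈ H → r x y → r (x + z) (y + z))) ∧
      ∃ (Γ : Type u) (_ : LinearOrder Γ) (v : G → WithTop Γ),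
        IsValuation v ∧
        (∀ h ∈ H, ∀ g ∉ H, v g < v h) ∧
        (∀ g h : G, g ∉ H → h ∉ H → (r g h ↔ v h ≤ v g)) := by
  constructor
  · rintro ⟨h1, h2⟩
    classical
    letI lo : LinearOrder (QOStruct.QT r htqo) := QOStruct.qlo r htqo
    refine ⟨{ carrier := {x | QOStruct.Hp r x},
              zero_mem' := QOStruct.Hp_zero,
              add_mem' := fun ha hb => QOStruct.Hp_add htqo h1 h2 ha hb,
              neg_mem' := fun ha => QOStruct.Hp_neg ha }, ?_, ⟨?_, ?_⟩, ?_⟩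
    · intro s hs a ras
      by_contra hna
      exact QOStruct.below htqo h1 h2 hna hs ras
    · intro x y hx hy p q
      exact QOStruct.anti htqo h1 h2 hx hy p q
    · intro x y z hx hy hz p
      exact QOStruct.transH htqo h1 h2 hx hy hz p
    · refine ⟨QOStruct.QT r htqo, lo, QOStruct.qv r htqo, ⟨?_, ?_, ?_⟩, ?_, ?_⟩
      · intro g
        by_cases hg : g = 0
        · simp [QOStruct.qv, hg]
        · simp [QOStruct.qv, hg]
          exact WithTop.coe_ne_top
      · intro g
        by_cases hg : g = 0
        · simp [QOStruct.qv, hg]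
        · have hng : -g ≠ 0 := neg_ne_zero.mpr hg
          simp only [QOStruct.qv, if_neg hg, if_neg hng]
          by_cases hH : QOStruct.Hp r g
          · exact congrArg _ (Quotient.sound (Or.inl ⟨QOStruct.Hp_neg hH, hH⟩))
          · obtain ⟨s1, s2, _⟩ := QOStruct.vprop hH
            exact congrArg _ (Quotient.sound (Or.inr ⟨QOStruct.nHp_neg hH, hH, s2, s1⟩))
      · intro g h
        by_cases hg : g = 0
        · subst hg; rw [zero_add]; exact min_le_right _ _
        by_cases hh : h = 0
        · subst hh; rw [add_zero]; exact min_le_left _ _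
        by_cases hgh : g + h = 0
        · have : QOStruct.qv r htqo (g + h) = ⊤ := by simp [QOStruct.qv, hgh]
          rw [this]; exact le_top
        have key : QOStruct.qle0 r g (g + h) ∨ QOStruct.qle0 r h (g + h) := by
          by_cases hs : QOStruct.Hp r (g + h)
          · exact Or.inl (Or.inl hs)
          by_cases hgm : QOStruct.Hp r g
          · have hhm : ¬ QOStruct.Hp r h := fun c => hs (QOStruct.Hp_add htqo h1 h2 hgm c)
            exact Or.inr (Or.inr ⟨hhm, (QOStruct.inf htqo h1 h2 hgm hhm).1⟩)
          by_cases hhm : QOStruct.Hp r h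
          · have e := (QOStruct.inf htqo h1 h2 hhm hgm).1
            rw [add_comm h g] at e
            exact Or.inl (Or.inr ⟨hgm, e⟩)
          by_cases rsg : r (g + h) g
          · exact Or.inl (Or.inr ⟨hgm, rsg⟩)
          by_cases rsh : r (g + h) h
          · exact Or.inr (Or.inr ⟨hhm, rsh⟩)
          exfalso
          obtain ⟨ss1, ss2, _⟩ := QOStruct.vprop hs
          obtain ⟨sh1, sh2, _⟩ := QOStruct.vprop hhm
          have rhs' : r h (g + h) := (htqo.2.2 _ _).resolve_left rsh
          have side1 : ¬ (r (g + h) (-h) ∧ r (-h) (g + h)) := fun hc =>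
            rsh (htqo.2.1 _ _ _ hc.1 sh2)
          have e1 := h2 h (g + h) (-h) rhs' side1
          have k1 : h + -h = (0 : G) := add_neg_cancel h
          have k2 : g + h + -h = g := by abel
          rw [k1, k2] at e1
          have side2 : ¬ (r g (-(g + h)) ∧ r (-(g + h)) g) := fun hc =>
            rsg (htqo.2.1 _ _ _ ss1 hc.2)
          have e2 := h2 0 g (-(g + h)) e1 side2
          have k3 : (0 : G) + -(g + h) = -(g + h) := zero_add _
          have k4 : g + -(g + h) = -h := by abel
          rw [k3, k4] at e2
          exact rsh (htqo.2.1 _ _ _ (htqo.2.1 _ _ _ ss1 e2) sh2)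
        simp only [QOStruct.qv, if_neg hg, if_neg hh, if_neg hgh]
        rcases key with k | k
        · exact le_trans (min_le_left _ _) (WithTop.coe_le_coe.mpr k)
        · exact le_trans (min_le_right _ _) (WithTop.coe_le_coe.mpr k)
      · intro h hh g hg
        have hg0 : g ≠ 0 := by rintro rfl; exact hg QOStruct.Hp_zero
        by_cases hh0 : h = 0
        · simp only [QOStruct.qv, if_pos hh0, if_neg hg0]
          exact WithTop.coe_lt_top _
        · simp only [QOStruct.qv, if_neg hg0, if_neg hh0]
          refine WithTop.coe_lt_coe.mpr ?_
          refine lt_iff_le_not_ge.mpr ⟨show QOStruct.qle0 r g h from Or.inl hh, ?_⟩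
          intro c
          have c' : QOStruct.qle0 r h g := c
          rcases c' with hgH | ⟨hnh, _⟩
          · exact hg hgH
          · exact hnh hh
      · intro g h hg hh
        have hg0 : g ≠ 0 := by rintro rfl; exact hg QOStruct.Hp_zero
        have hh0 : h ≠ 0 := by rintro rfl; exact hh QOStruct.Hp_zero
        simp only [QOStruct.qv, if_neg hg0, if_neg hh0]
        refine Iff.trans ?_ WithTop.coe_le_coe.symm
        constructor
        · intro p
          exact show QOStruct.qle0 r h g from Or.inr ⟨hh, p⟩
        · intro c
          have c' : QOStruct.qle0 r h g := c
          rcases c' with hgH | ⟨_, p⟩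
          · exact absurd hgH hg
          · exact p
  · rintro ⟨H, hinit, ⟨hanti, htr⟩, Γ, lo, v, ⟨hvtop, hvneg, hvmin⟩, hsep, hiff⟩
    letI : LinearOrder Γ := lo
    have below' : ∀ g ∉ H, ∀ h' ∈ H, r h' g ∧ ¬ r g h' := by
      intro g hg h' hh
      have n1 : ¬ r g h' := fun c => hg (hinit h' hh g c)
      exact ⟨(htqo.2.2 g h').resolve_left n1, n1⟩
    have vadd : ∀ a b : G, v a < v b → v (a + b) = v a := by
      intro a b hab
      have hmin : min (v a) (v b) ≤ v (a + b) := hvmin a b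
      rw [min_eq_left hab.le] at hmin
      have h2' : min (v (a + b)) (v (-b)) ≤ v ((a + b) + -b) := hvmin _ _
      rw [hvneg] at h2'
      have k : (a + b) + -b = a := by abel
      rw [k] at h2'
      refine le_antisymm ?_ hmin
      rcases min_le_iff.mp h2' with h' | h'
      · exact h'
      · exact ((not_le.mpr hab) h').elim
    constructor
    · intro x hx0 h0x
      exact hanti x 0 (hinit 0 H.zero_mem x hx0) H.zero_mem hx0 h0x
    · intro x y z rxy hns
      by_cases hy : y ∈ H
      · have hx : x ∈ H := hinit y hy x rxy
        by_cases hz : z ∈ H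
        · exact htr x y z hx hy hz rxy
        · have hxz : x + z ∉ H := fun c => hz (by have := H.sub_mem c hx; simpa using this)
          have hyz : y + z ∉ H := fun c => hz (by have := H.sub_mem c hy; simpa using this)
          have v1 : v (x + z) = v z := by rw [add_comm]; exact vadd z x (hsep x hx z hz)
          have v2 : v (y + z) = v z := by rw [add_comm]; exact vadd z y (hsep y hy z hz)
          exact (hiff _ _ hxz hyz).mpr (le_of_eq (v2.trans v1.symm))
      · by_cases hz : z ∈ H
        · have v2 : v (y + z) = v y := vadd y z (hsep z hz y hy)
          have hyz : y + z ∉ H := fun c => hy (by have := H.sub_mem c hz; simpa using this)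
          by_cases hx : x ∈ H
          · exact (below' (y + z) hyz (x + z) (H.add_mem hx hz)).1
          · have v1 : v (x + z) = v x := vadd x z (hsep z hz x hx)
            have hxz : x + z ∉ H := fun c => hx (by have := H.sub_mem c hz; simpa using this)
            refine (hiff _ _ hxz hyz).mpr ?_
            rw [v1, v2]
            exact (hiff x y hx hy).mp rxy
        · have hvyz : v y ≠ v z := by
            intro he
            exact hns ⟨(hiff y z hy hz).mpr he.ge, (hiff z y hz hy).mpr he.le⟩
          have hmem : ∀ a : G, a ∉ H → ∀ b : G, v b = v a → b ∉ H := by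
            intro a ha b hvb hbH
            exact absurd (hsep b hbH a ha) (by rw [hvb]; exact lt_irrefl _)
          rcases lt_or_gt_of_ne hvyz with hlt | hgt
          · have v2 : v (y + z) = v y := vadd y z hlt
            have hyz : y + z ∉ H := hmem y hy (y + z) v2
            by_cases hx : x ∈ H
            · have v1 : v (x + z) = v z := by rw [add_comm]; exact vadd z x (hsep x hx z hz)
              have hxz : x + z ∉ H := hmem z hz (x + z) v1
              refine (hiff _ _ hxz hyz).mpr ?_
              rw [v1, v2]
              exact hlt.le
            · have hvxy : v y ≤ v x := (hiff x y hx hy).mp rxy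
              have hle : v (y + z) ≤ v (x + z) := by
                rw [v2]
                exact le_trans (le_min hvxy hlt.le) (hvmin x z)
              by_cases hxz : x + z ∈ H
              · exact (below' (y + z) hyz (x + z) hxz).1
              · exact (hiff _ _ hxz hyz).mpr hle
          · have v2 : v (y + z) = v z := by rw [add_comm]; exact vadd z y hgt
            have hyz : y + z ∉ H := hmem z hz (y + z) v2
            by_cases hx : x ∈ H
            · have v1 : v (x + z) = v z := by rw [add_comm]; exact vadd z x (hsep x hx z hz)
              have hxz : x + z ∉ H := hmem z hz (x + z) v1
              exact (hiff _ _ hxz hyz).mpr (le_of_eq (v2.trans v1.symm))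
            · have hvxy : v y ≤ v x := (hiff x y hx hy).mp rxy
              have hle : v (y + z) ≤ v (x + z) := by
                rw [v2]
                exact le_trans (le_min (le_trans hgt.le hvxy) le_rfl) (hvmin x z)
              by_cases hxz : x + z ∈ H
              · exact (below' (y + z) hyz (x + z) hxz).1
              · exact (hiff _ _ hxz hyz).mpr hle
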